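/- For any fixed $\varepsilon \geq 0$, the function $h : \mathbb{R}_{> 0} \to \mathbb{R}$ defined by $h(\eta) = \Pr[\mathcal{N}(\eta, 2\eta) \geq \varepsilon] - e^{\varepsilon}\Pr[\mathcal{N}(\eta, 2\eta) \leq -\varepsilon]$ is monotonically increasing in $\eta$. -/

import Mathlib

open MeasureTheory ProbabilityTheory

noncomputable def stdPhi (x : ℝ) : ℝ := ∫ t in Set.Iic x, gaussianPDFReal 0 1 t

lemma continuous_pdf : Continuous (gaussianPDFReal 0 1) := by
  rw [gaussianPDFReal_def]
  fun_prop

lemma hasDerivAt_stdPhi (x : ℝ) : HasDerivAt stdPhi (gaussianPDFReal 0 1 x) x := by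
  have hint := integrable_gaussianPDFReal 0 1
  have key : ∀ y : ℝ, stdPhi y = stdPhi 0 + ∫ t in (0:ℝ)..y, gaussianPDFReal 0 1 t := by
    intro y
    have := intervalIntegral.integral_Iic_sub_Iic (hint.integrableOn) (hint.integrableOn)
      (a := 0) (b := y)
    unfold stdPhi
    linarith [this]
  have hd : HasDerivAt (fun y => stdPhi 0 + ∫ t in (0:ℝ)..y, gaussianPDFReal 0 1 t)
      (gaussianPDFReal 0 1 x) x := by
    refine HasDerivAt.const_add _ ?_
    exact intervalIntegral.integral_hasDerivAt_right (hint.intervalIntegrable)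
      (continuous_pdf.stronglyMeasurable.stronglyMeasurableAtFilter)
      (continuous_pdf.continuousAt)
  exact hd.congr_of_eventuallyEq (Filter.Eventually.of_forall key)

lemma stdPhi_Iic (a : ℝ) : ((gaussianReal 0 1) (Set.Iic a)).toReal = stdPhi a := by
  rw [gaussianReal_apply_eq_integral 0 one_ne_zero, ENNReal.toReal_ofReal]
  · rfl
  · exact setIntegral_nonneg measurableSet_Iic fun x _ => gaussianPDFReal_nonneg 0 1 x

lemma stdPhi_Ici (a : ℝ) : ((gaussianReal 0 1) (Set.Ici a)).toReal = 1 - stdPhi a := by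
  rw [gaussianReal_apply_eq_integral 0 one_ne_zero, ENNReal.toReal_ofReal]
  · have h1 : (∫ x in Set.Iio a, gaussianPDFReal 0 1 x) +
        (∫ x in (Set.Iio a)ᶜ, gaussianPDFReal 0 1 x) = ∫ x, gaussianPDFReal 0 1 x :=
      integral_add_compl measurableSet_Iio (integrable_gaussianPDFReal 0 1)
    rw [Set.compl_Iio] at h1
    rw [integral_gaussianPDFReal_eq_one 0 one_ne_zero] at h1
    have h2 : (∫ x in Set.Iio a, gaussianPDFReal 0 1 x) = stdPhi a :=
      (integral_Iic_eq_integral_Iio).symm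
    linarith
  · exact setIntegral_nonneg measurableSet_Ici fun x _ => gaussianPDFReal_nonneg 0 1 x

lemma gauss_transfer {η : ℝ} (hη : 0 < η) {s : Set ℝ} (hs : MeasurableSet s) :
    gaussianReal η (2 * η).toNNReal s =
      (gaussianReal 0 1) ((fun x => Real.sqrt (2 * η) * x + η) ⁻¹' s) := by
  set S := Real.sqrt (2 * η) with hS
  have hS0 : 0 < S := Real.sqrt_pos.mpr (by linarith)
  have hv : (⟨S ^ 2, sq_nonneg _⟩ : NNReal) = (2 * η).toNNReal := by
    ext
    simp [Real.sq_sqrt (by linarith : (0:ℝ) ≤ 2 * η), Real.toNNReal, max_eq_left (by linarith : (0:ℝ) ≤ 2*η)]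
    rw [hS, Real.sq_sqrt (by linarith : (0:ℝ) ≤ 2 * η)]
  have h1 : (gaussianReal 0 1).map (S * ·) = gaussianReal 0 ((2 * η).toNNReal) := by
    rw [gaussianReal_map_const_mul S, mul_zero, mul_one]
    exact congrArg _ hv
  have h2 : (gaussianReal 0 ((2 * η).toNNReal)).map (· + η) =
      gaussianReal η ((2 * η).toNNReal) := by
    rw [gaussianReal_map_add_const η, zero_add]
  have h3 : gaussianReal η ((2 * η).toNNReal) =
      (gaussianReal 0 1).map (fun x => S * x + η) := by
    rw [← h2, ← h1, Measure.map_map (measurable_add_const η) (measurable_const_mul S)]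
    rfl
  rw [h3]
  exact Measure.map_apply (by fun_prop) hs

noncomputable def gfun (ε η : ℝ) : ℝ :=
  1 - stdPhi ((ε - η) / Real.sqrt (2 * η)) -
    Real.exp ε * stdPhi ((-ε - η) / Real.sqrt (2 * η))

lemma preimage_Iic {η : ℝ} (hη : 0 < η) (c : ℝ) :
    (fun x => Real.sqrt (2 * η) * x + η) ⁻¹' Set.Iic c
      = Set.Iic ((c - η) / Real.sqrt (2 * η)) := by
  have hS0 : 0 < Real.sqrt (2 * η) := Real.sqrt_pos.mpr (by linarith)
  ext x
  simp only [Set.mem_preimage, Set.mem_Iic, le_div_iff₀ hS0, mul_comm x]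
  constructor <;> intro <;> linarith

lemma preimage_Ici {η : ℝ} (hη : 0 < η) (c : ℝ) :
    (fun x => Real.sqrt (2 * η) * x + η) ⁻¹' Set.Ici c
      = Set.Ici ((c - η) / Real.sqrt (2 * η)) := by
  have hS0 : 0 < Real.sqrt (2 * η) := Real.sqrt_pos.mpr (by linarith)
  ext x
  simp only [Set.mem_preimage, Set.mem_Ici, div_le_iff₀ hS0, mul_comm x]
  constructor <;> intro <;> linarith

lemma hval (ε : ℝ) {η : ℝ} (hη : 0 < η) :
    ((gaussianReal η (2 * η).toNNReal) (Set.Ici ε)).toReal -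
        Real.exp ε * ((gaussianReal η (2 * η).toNNReal) (Set.Iic (-ε))).toReal
      = gfun ε η := by
  rw [gauss_transfer hη measurableSet_Ici, gauss_transfer hη measurableSet_Iic,
    preimage_Ici hη, preimage_Iic hη, stdPhi_Ici, stdPhi_Iic]
  rfl

lemma gfun_hasDerivAt (ε : ℝ) {η : ℝ} (hη : 0 < η) :
    ∃ D : ℝ, 0 ≤ D ∧ HasDerivAt (gfun ε) D η := by
  set S := Real.sqrt (2 * η) with hSdef
  have hS0 : 0 < S := Real.sqrt_pos.mpr (by linarith)
  have hSne : S ≠ 0 := ne_of_gt hS0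
  have hS2 : S ^ 2 = 2 * η := Real.sq_sqrt (by linarith)
  have hS' : HasDerivAt (fun t : ℝ => Real.sqrt (2 * t)) S⁻¹ η := by
    have h1 : HasDerivAt (fun t : ℝ => 2 * t) 2 η := by
      simpa using (hasDerivAt_id η).const_mul 2
    have h2 := (Real.hasDerivAt_sqrt (by positivity : 2 * η ≠ 0)).comp η h1
    have h3 : 1 / (2 * Real.sqrt (2 * η)) * 2 = S⁻¹ := by
      rw [← hSdef]
      have hS0 : 0 < S := Real.sqrt_pos.mpr (by linarith)
      field_simp
    exact h3 ▸ h2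
  have hu : HasDerivAt (fun t : ℝ => (ε - t) / Real.sqrt (2 * t))
      (((-1) * S - (ε - η) * S⁻¹) / S ^ 2) η := by
    exact ((hasDerivAt_id η).const_sub ε).div hS' hSne
  have hw : HasDerivAt (fun t : ℝ => (-ε - t) / Real.sqrt (2 * t))
      (((-1) * S - (-ε - η) * S⁻¹) / S ^ 2) η := by
    exact ((hasDerivAt_id η).const_sub (-ε)).div hS' hSne
  set u' := ((-1) * S - (ε - η) * S⁻¹) / S ^ 2 with hu'
  set w' := ((-1) * S - (-ε - η) * S⁻¹) / S ^ 2 with hw'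
  set P := gaussianPDFReal 0 1 ((ε - η) / S) with hP
  have hPw : Real.exp ε * gaussianPDFReal 0 1 ((-ε - η) / S) = P := by
    have hsq : ((-ε - η) / S) ^ 2 = ((ε - η) / S) ^ 2 + 2 * ε := by
      rw [div_pow, div_pow, hS2]
      field_simp
      ring
    rw [hP]
    unfold gaussianPDFReal
    rw [mul_left_comm, ← Real.exp_add]
    congr 1
    rw [Real.exp_eq_exp]
    simp only [sub_zero, NNReal.coe_one, mul_one]
    rw [hsq]
    ring
  have hΦu := (hasDerivAt_stdPhi ((ε - η) / S)).comp η hu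
  have hΦw := (hasDerivAt_stdPhi ((-ε - η) / S)).comp η hw
  have hg : HasDerivAt (gfun ε)
      (-(P * u') - Real.exp ε * (gaussianPDFReal 0 1 ((-ε - η) / S) * w')) η := by
    unfold gfun
    exact (hΦu.const_sub 1).sub (hΦw.const_mul (Real.exp ε))
  refine ⟨_, ?_, hg⟩
  have hrw : Real.exp ε * (gaussianPDFReal 0 1 ((-ε - η) / S) * w') = P * w' := by
    rw [← mul_assoc, hPw]
  rw [hrw]
  have hsum : u' + w' = -S⁻¹ := by
    rw [hu', hw']
    field_simp
    nlinarith [hS2]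
  have hPnn : 0 ≤ P := gaussianPDFReal_nonneg 0 1 _
  have : -(P * u') - P * w' = P * S⁻¹ := by
    have : u' = -S⁻¹ - w' := by linarith
    rw [this]; ring
  rw [this]
  positivity

theorem monotone_privacy_profile (ε : ℝ) (hε : 0 ≤ ε) :
    MonotoneOn (fun η : ℝ =>
        ((gaussianReal η (2 * η).toNNReal) (Set.Ici ε)).toReal -
          Real.exp ε * ((gaussianReal η (2 * η).toNNReal) (Set.Iic (-ε))).toReal)
      (Set.Ioi (0 : ℝ)) := by
  have hmono : MonotoneOn (gfun ε) (Set.Ioi 0) := by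
    apply monotoneOn_of_deriv_nonneg (convex_Ioi 0)
    · intro x hx
      obtain ⟨D, _, hD⟩ := gfun_hasDerivAt ε hx
      exact hD.differentiableAt.continuousAt.continuousWithinAt
    · rw [interior_Ioi]
      intro x hx
      obtain ⟨D, _, hD⟩ := gfun_hasDerivAt ε hx
      exact hD.differentiableAt.differentiableWithinAt
    · rw [interior_Ioi]
      intro x hx
      obtain ⟨D, hD0, hD⟩ := gfun_hasDerivAt ε hx
      rw [hD.deriv]
      exact hD0
  intro a ha b hb hab
  simp only
  rw [hval ε ha, hval ε hb]
  exact hmono ha hb hab
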